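/- Every nonsingular weakly diagonally dominant M-matrix is a weakly chained diagonally dominant L-matrix. That is, if A is weakly diagonally dominant, A = sI − C for some entrywise nonnegative matrix C and real s ≥ ρ(C), and A is invertible, then A is a w.c.d.d. L-matrix. -/

import Mathlib

open Matrix Filter Finset

/-- A substochastic matrix: nonnegative entries, row sums at most one. -/
def IsSubstochastic {m n : Type*} [Fintype n] (B : Matrix m n ℝ) : Prop :=
  (∀ i j, 0 ≤ B i j) ∧ ∀ i, ∑ j, B i j ≤ 1

/-- Ĵ(B): the set of rows with row-sum strictly less than one. -/
def Jhat {m n : Type*} [Fintype n] (B : Matrix m n ℝ) : Set m :=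
  {i | ∑ j, B i j < 1}

/-- There is a walk of length `ℓ` (a nonempty sequence of `ℓ` consecutive edges) in the
digraph of `A` (edge `i → j` iff `A i j ≠ 0`) starting at `i` and ending in `S`. -/
def IsWalkTo {V : Type*} (A : Matrix V V ℝ) (i : V) (S : Set V) (ℓ : ℕ) : Prop :=
  1 ≤ ℓ ∧ ∃ w : ℕ → V, w 0 = i ∧ (∀ k < ℓ, A (w k) (w (k + 1)) ≠ 0) ∧ w ℓ ∈ S

/-- The index of contraction `ĉon B ∈ ℕ∞`:
`max(0, sup_{i ∉ Ĵ(B)} inf_{p ∈ P̂ᵢ(B)} |p|)` with `inf ∅ = ∞`, `sup ∅ = -∞`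
(in `ℕ∞` the empty supremum is `0`, matching `max(0, -∞) = 0`). -/
noncomputable def conHat {V : Type*} [Fintype V] (B : Matrix V V ℝ) : ℕ∞ :=
  ⨆ i ∈ (Jhat B)ᶜ, ⨅ ℓ ∈ {ℓ : ℕ | IsWalkTo B i (Jhat B) ℓ}, (ℓ : ℕ∞)

/-- The maximum absolute row-sum norm `‖·‖_∞`. -/
noncomputable def rowSumNorm {m n : Type*} [Fintype n] (B : Matrix m n ℝ) : ℝ :=
  ⨆ i, ∑ j, |B i j|

/-- `B` is convergent: `Bᵏ → 0` as `k → ∞`. -/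
def IsConvergent {V : Type*} [Fintype V] [DecidableEq V] (B : Matrix V V ℝ) : Prop :=
  Tendsto (fun k : ℕ => B ^ k) atTop (nhds 0)

/-- `B` is irreducible: its digraph is strongly connected, i.e. for every pair of
vertices `i, j` there is a walk from `i` to `j`. -/
def IsIrreducibleMat {V : Type*} (B : Matrix V V ℝ) : Prop :=
  ∀ i j : V, ∃ ℓ : ℕ, 1 ≤ ℓ ∧
    ∃ w : ℕ → V, w 0 = i ∧ w ℓ = j ∧ ∀ k < ℓ, B (w k) (w (k + 1)) ≠ 0

/-- `J(A)`: the set of rows of a square matrix that are strictly diagonally dominant. -/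
def Jdom {n : Type*} [Fintype n] [DecidableEq n] (A : Matrix n n ℝ) : Set n :=
  {i | ∑ j ∈ Finset.univ.erase i, |A i j| < |A i i|}

/-- `A` is weakly diagonally dominant (w.d.d.). -/
def IsWDD {n : Type*} [Fintype n] [DecidableEq n] (A : Matrix n n ℝ) : Prop :=
  ∀ i, ∑ j ∈ Finset.univ.erase i, |A i j| ≤ |A i i|

/-- The index of connectivity `con A ∈ ℕ∞`. -/
noncomputable def conn {n : Type*} [Fintype n] [DecidableEq n] (A : Matrix n n ℝ) : ℕ∞ :=
  ⨆ i ∈ (Jdom A)ᶜ, ⨅ ℓ ∈ {ℓ : ℕ | IsWalkTo A i (Jdom A) ℓ}, (ℓ : ℕ∞)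

/-- `A` is weakly chained diagonally dominant (w.c.d.d.). -/
def IsWCDD {n : Type*} [Fintype n] [DecidableEq n] (A : Matrix n n ℝ) : Prop :=
  IsWDD A ∧ (Jdom A).Nonempty ∧ ∀ i ∉ Jdom A, ∃ ℓ : ℕ, IsWalkTo A i (Jdom A) ℓ

/-- The spectral radius of a square real matrix: the supremum of the absolute values of
its complex eigenvalues. -/
noncomputable def specRad {n : ℕ} (C : Matrix (Fin n) (Fin n) ℝ) : ℝ :=
  sSup {x : ℝ | ∃ μ ∈ spectrum ℂ (C.map Complex.ofReal), x = ‖μ‖}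

section AuxProof
open Polynomial

lemma charpoly_eval_eq {N : Type*} [Fintype N] [DecidableEq N] (M : Matrix N N ℂ) (μ : ℂ) :
    M.charpoly.eval μ = (Matrix.scalar N μ - M).det := by
  rw [Matrix.charpoly, _root_.eval_det, Matrix.matPolyEquiv_charmatrix]
  simp

lemma mem_spectrum_iff_root {N : Type*} [Fintype N] [DecidableEq N] (M : Matrix N N ℂ) (μ : ℂ) :
    μ ∈ spectrum ℂ M ↔ M.charpoly.IsRoot μ := by
  rw [spectrum.mem_iff, Polynomial.IsRoot, charpoly_eval_eq,
    Matrix.isUnit_iff_isUnit_det, isUnit_iff_ne_zero, not_not, Matrix.scalar_apply]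
  rw [show (algebraMap ℂ (Matrix N N ℂ)) μ = Matrix.diagonal (fun _ => μ) by
    ext i j; simp [Matrix.algebraMap_matrix_apply, Matrix.diagonal_apply]]

lemma norm_le_specRad {n : ℕ} (C : Matrix (Fin n) (Fin n) ℝ) {μ : ℂ}
    (hμ : μ ∈ spectrum ℂ (C.map Complex.ofReal)) : ‖μ‖ ≤ specRad C := by
  refine le_csSup ?_ ⟨μ, hμ, rfl⟩
  have : {x : ℝ | ∃ μ ∈ spectrum ℂ (C.map Complex.ofReal), x = ‖μ‖}
      = (fun z : ℂ => ‖z‖) '' spectrum ℂ (C.map Complex.ofReal) := by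
    ext x; simp [eq_comm]
  rw [this]
  exact ((Matrix.finite_spectrum _).image _).bddAbove

lemma spectrum_nonempty' {n : ℕ} (hn : 0 < n) (M : Matrix (Fin n) (Fin n) ℂ) :
    (spectrum ℂ M).Nonempty := by
  haveI : Nonempty (Fin n) := ⟨⟨0, hn⟩⟩
  exact spectrum.nonempty_of_isAlgClosed_of_finiteDimensional ℂ M

lemma diag_le_of_specRad_le {n : ℕ} (hn : 0 < n) (C : Matrix (Fin n) (Fin n) ℝ)
    (hC : ∀ i j, 0 ≤ C i j) {s : ℝ} (hs : specRad C ≤ s) (i : Fin n) : C i i ≤ s := by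
  by_contra hlt
  push_neg at hlt
  set Cc : Matrix (Fin n) (Fin n) ℂ := C.map Complex.ofReal with hCc
  have hbound : ∀ μ ∈ spectrum ℂ Cc, ‖μ‖ ≤ s := fun μ h => (norm_le_specRad C h).trans hs
  have hs0 : 0 ≤ s := by
    obtain ⟨μ, hμ⟩ := spectrum_nonempty' hn Cc
    exact (norm_nonneg μ).trans (hbound μ hμ)
  have hr0 : 0 < C i i := lt_of_le_of_lt hs0 hlt
  have hpow : ∀ k : ℕ, ∀ a b, 0 ≤ (C ^ k) a b := by
    intro k
    induction k with
    | zero => intro a b; by_cases h : a = b <;> simp [pow_zero, Matrix.one_apply, h]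
    | succ m ih =>
      intro a b
      rw [pow_succ, Matrix.mul_apply]
      exact Finset.sum_nonneg fun j _ => mul_nonneg (ih a j) (hC j b)
  have hdiagpow : ∀ k : ℕ, (C i i) ^ k ≤ (C ^ k) i i := by
    intro k
    induction k with
    | zero => simp
    | succ m ih =>
      rw [pow_succ, pow_succ, Matrix.mul_apply]
      calc C i i ^ m * C i i ≤ (C ^ m) i i * C i i :=
            mul_le_mul_of_nonneg_right ih (hC i i)
        _ ≤ ∑ j, (C ^ m) i j * C j i :=
            Finset.single_le_sum (f := fun j => (C ^ m) i j * C j i)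
              (fun j _ => mul_nonneg (hpow m i j) (hC j i)) (Finset.mem_univ i)
  have key : ∀ k : ℕ, 0 < k → (C i i) ^ k ≤ n * s ^ k := by
    intro k hk
    have htr : (C i i) ^ k ≤ (C ^ k).trace := by
      refine (hdiagpow k).trans ?_
      exact Finset.single_le_sum (f := fun j => (C ^ k) j j)
        (fun j _ => hpow k j j) (Finset.mem_univ i)
    have htr0 : 0 ≤ (C ^ k).trace := le_trans (pow_nonneg hr0.le k) htr
    have hmap : Cc ^ k = ((C ^ k).map Complex.ofReal) := by
      have h := map_pow (Complex.ofRealHom.mapMatrix) C k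
      simpa [RingHom.mapMatrix_apply, hCc, show (⇑Complex.ofRealHom) = Complex.ofReal from rfl] using h.symm
    have htrc : (Cc ^ k).trace = (((C ^ k).trace : ℝ) : ℂ) := by
      rw [hmap, Matrix.trace, Matrix.trace]
      push_cast
      simp [Matrix.diag, Matrix.map_apply]
    have hroots : (Cc ^ k).trace = ((Cc ^ k).charpoly.roots).sum :=
      Matrix.trace_eq_sum_roots_charpoly _
    have hrbound : ∀ x ∈ ((Cc ^ k).charpoly.roots).map (fun z : ℂ => ‖z‖), x ≤ s ^ k := by
      intro x hx
      obtain ⟨μ, hμ, rfl⟩ := Multiset.mem_map.mp hx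
      have hmem : μ ∈ spectrum ℂ (Cc ^ k) :=
        (mem_spectrum_iff_root _ μ).mpr ((Polynomial.mem_roots'.mp hμ).2)
      rw [spectrum.map_pow_of_pos Cc hk] at hmem
      obtain ⟨ν, hν, rfl⟩ := hmem
      calc ‖ν ^ k‖ = ‖ν‖ ^ k := norm_pow ν k
        _ ≤ s ^ k := pow_le_pow_left₀ (norm_nonneg ν) (hbound ν hν) k
    have hcard : (Multiset.card ((Cc ^ k).charpoly.roots) : ℝ) ≤ n := by
      have h1 := (Cc ^ k).charpoly.card_roots'
      haveI : Nonempty (Fin n) := ⟨⟨0, hn⟩⟩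
      rw [Matrix.charpoly_natDegree_eq_dim, Fintype.card_fin] at h1
      exact_mod_cast h1
    calc (C i i) ^ k ≤ (C ^ k).trace := htr
      _ = ‖(((C ^ k).trace : ℝ) : ℂ)‖ := by
          rw [Complex.norm_real, Real.norm_of_nonneg htr0]
      _ = ‖((Cc ^ k).charpoly.roots).sum‖ := by rw [← htrc, hroots]
      _ ≤ (((Cc ^ k).charpoly.roots).map (fun z : ℂ => ‖z‖)).sum := norm_multiset_sum_le _
      _ ≤ (Multiset.card (((Cc ^ k).charpoly.roots).map (fun z : ℂ => ‖z‖))) • (s ^ k) :=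
          Multiset.sum_le_card_nsmul _ _ hrbound
      _ ≤ n * s ^ k := by
          rw [Multiset.card_map, nsmul_eq_mul]
          exact mul_le_mul_of_nonneg_right hcard (pow_nonneg hs0 k)
  rcases eq_or_lt_of_le hs0 with hseq | hspos
  · have h1 := key 1 one_pos
    rw [← hseq] at h1
    simp at h1
    exact absurd h1 (not_le.mpr hr0)
  · obtain ⟨k, hk⟩ := pow_unbounded_of_one_lt (n : ℝ) ((one_lt_div hspos).mpr hlt)
    have hk1 : (n : ℝ) < (C i i / s) ^ (k + 1) := by
      refine hk.trans_le (pow_le_pow_right₀ ?_ (Nat.le_succ k))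
      exact le_of_lt ((one_lt_div hspos).mpr hlt)
    have h2 := key (k + 1) (Nat.succ_pos k)
    have h3 : (n : ℝ) * s ^ (k + 1) < (C i i / s) ^ (k + 1) * s ^ (k + 1) :=
      mul_lt_mul_of_pos_right hk1 (pow_pos hspos _)
    rw [div_pow, div_mul_cancel₀ _ (pow_ne_zero _ hspos.ne')] at h3
    exact absurd (h2.trans_lt h3) (lt_irrefl _)

end AuxProof

section AuxWalk

lemma det_zero_of_no_walk {n : ℕ} (A : Matrix (Fin n) (Fin n) ℝ) (hwdd : IsWDD A)
    (hdiag : ∀ j, 0 ≤ A j j) (hoff : ∀ j k, j ≠ k → A j k ≤ 0)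
    (i : Fin n) (hi : i ∉ Jdom A) (hno : ∀ ℓ : ℕ, ¬ IsWalkTo A i (Jdom A) ℓ) :
    A.det = 0 := by
  classical
  set R : Set (Fin n) := {j | j = i ∨ ∃ ℓ : ℕ, 1 ≤ ℓ ∧ ∃ w : ℕ → Fin n,
    w 0 = i ∧ (∀ k < ℓ, A (w k) (w (k + 1)) ≠ 0) ∧ w ℓ = j} with hR
  have hiR : i ∈ R := Or.inl rfl
  have hclosed : ∀ j ∈ R, ∀ k, A j k ≠ 0 → k ∈ R := by
    rintro j (rfl | ⟨ℓ, hℓ, w, hw0, hwe, hwℓ⟩) k hAk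
    · exact Or.inr ⟨1, le_refl 1, fun m => if m = 0 then j else k, by simp, by
        intro m hm
        interval_cases m
        simpa using hAk, by simp⟩
    · refine Or.inr ⟨ℓ + 1, by omega, fun m => if m ≤ ℓ then w m else k, by simp [hw0], ?_, by simp⟩
      intro m hm
      rcases lt_or_eq_of_le (Nat.lt_succ_iff.mp hm) with hmℓ | rfl
      · simpa [Nat.le_of_lt hmℓ, Nat.succ_le_of_lt hmℓ] using hwe m hmℓ
      · simpa [hwℓ] using hAk
  have hRJ : ∀ j ∈ R, j ∉ Jdom A := by
    rintro j (rfl | ⟨ℓ, hℓ, w, hw0, hwe, hwℓ⟩) hjJ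
    · exact hi hjJ
    · exact hno ℓ ⟨hℓ, w, hw0, hwe, hwℓ ▸ hjJ⟩
  have hzero : ∀ j ∈ R, ∀ k, k ∉ R → A j k = 0 := by
    intro j hj k hk
    by_contra h
    exact hk (hclosed j hj k h)
  -- each row j ∈ R sums to zero over R
  have hsum : ∀ g : Fin n → ℝ,
      ∑ k ∈ Finset.univ.filter (· ∈ R), g k = ∑ k : {j // j ∈ R}, g k.val := fun g =>
    Finset.sum_subtype _ (by simp) g
  have hrow : ∀ j ∈ R, ∑ k ∈ Finset.univ.filter (· ∈ R), A j k = 0 := by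
    intro j hj
    have heq : ∑ k ∈ Finset.univ.erase j, |A j k| = A j j := by
      have h1 := hwdd j
      have h2 : ¬ (∑ k ∈ Finset.univ.erase j, |A j k| < |A j j|) := hRJ j hj
      have := le_antisymm h1 (not_lt.mp h2)
      rw [this, abs_of_nonneg (hdiag j)]
    have hoffsum : ∑ k ∈ Finset.univ.erase j, A j k = -A j j := by
      have : ∑ k ∈ Finset.univ.erase j, A j k = -∑ k ∈ Finset.univ.erase j, |A j k| := by
        rw [← Finset.sum_neg_distrib]
        refine Finset.sum_congr rfl fun k hk => ?_
        rw [abs_of_nonpos (hoff j k (Finset.ne_of_mem_erase hk).symm)]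
        ring
      rw [this, heq]
    have hfull : ∑ k, A j k = 0 := by
      rw [← Finset.add_sum_erase _ _ (Finset.mem_univ j), hoffsum]
      ring
    calc ∑ k ∈ Finset.univ.filter (· ∈ R), A j k = ∑ k, A j k := by
          refine Finset.sum_subset (Finset.filter_subset _ _) fun k _ hk => ?_
          exact hzero j hj k (by simpa using hk)
      _ = 0 := hfull
  -- pass to submatrix on R
  set B : Matrix {j // j ∈ R} {j // j ∈ R} ℝ := A.submatrix Subtype.val Subtype.val with hB
  have hBdet : B.det = 0 := by
    rw [← Matrix.exists_mulVec_eq_zero_iff]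
    refine ⟨fun _ => 1, ?_, ?_⟩
    · intro h
      have := congrFun h ⟨i, hiR⟩
      simp at this
    · funext j
      have : ∑ k : {j // j ∈ R}, A j.val k.val = ∑ k ∈ Finset.univ.filter (· ∈ R), A j.val k :=
        (hsum _).symm
      simp only [Matrix.mulVec, dotProduct, Pi.zero_apply, mul_one, hB,
        Matrix.submatrix_apply]
      rw [this]
      exact hrow j.val j.prop
  obtain ⟨w, hw0, hwB⟩ := (Matrix.exists_vecMul_eq_zero_iff).mpr hBdet
  set y : Fin n → ℝ := fun j => if h : j ∈ R then w ⟨j, h⟩ else 0 with hy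
  have hyA : y ᵥ* A = 0 := by
    funext k
    have hsplit : ∑ j, y j * A j k = ∑ j ∈ Finset.univ.filter (· ∈ R), y j * A j k := by
      symm
      refine Finset.sum_subset (Finset.filter_subset _ _) fun j _ hj => ?_
      have : j ∉ R := by simpa using hj
      simp [hy, this]
    have hsub : ∑ j ∈ Finset.univ.filter (· ∈ R), y j * A j k
        = ∑ j : {j // j ∈ R}, w j * A j.val k := by
      rw [hsum fun j => y j * A j k]
      refine Finset.sum_congr rfl fun j _ => ?_
      simp [hy, j.prop]
    simp only [Matrix.vecMul, dotProduct, Pi.zero_apply]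
    rw [hsplit, hsub]
    by_cases hk : k ∈ R
    · have := congrFun hwB ⟨k, hk⟩
      simpa [Matrix.vecMul, dotProduct, hB] using this
    · refine Finset.sum_eq_zero fun j _ => ?_
      rw [hzero j.val j.prop k hk, mul_zero]
  have hy0 : y ≠ 0 := by
    intro h
    apply hw0
    funext j
    have := congrFun h j.val
    simpa [hy, j.prop] using this
  rw [← Matrix.exists_vecMul_eq_zero_iff]
  exact ⟨y, hy0, hyA⟩

end AuxWalk

theorem stmt16 {n : ℕ} (hn : 0 < n) (A C : Matrix (Fin n) (Fin n) ℝ) (s : ℝ)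
    (hwdd : IsWDD A)
    (hC : ∀ i j, 0 ≤ C i j)
    (hs : specRad C ≤ s)
    (hA : A = s • (1 : Matrix (Fin n) (Fin n) ℝ) - C)
    (hns : A.det ≠ 0) :
    (∀ i j, i ≠ j → A i j ≤ 0) ∧ (∀ i, 0 < A i i) ∧ IsWCDD A := by
  have hCs : ∀ i, C i i ≤ s := fun i => diag_le_of_specRad_le hn C hC hs i
  have hdval : ∀ i, A i i = s - C i i := by
    intro i
    rw [hA]
    simp [Matrix.sub_apply, Matrix.one_apply_eq]
  have hoff : ∀ i j, i ≠ j → A i j ≤ 0 := by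
    intro i j hij
    rw [hA]
    simp [Matrix.sub_apply, Matrix.one_apply_ne hij, hC i j]
  have hd0 : ∀ i, 0 ≤ A i i := fun i => by rw [hdval i]; linarith [hCs i]
  have hdpos : ∀ i, 0 < A i i := by
    intro i
    rcases lt_or_eq_of_le (hd0 i) with h | h
    · exact h
    · exfalso
      apply hns
      apply Matrix.det_eq_zero_of_row_eq_zero i
      intro j
      by_cases hij : j = i
      · rw [hij, ← h]
      · have h1 : |A i j| ≤ ∑ k ∈ Finset.univ.erase i, |A i k| :=
          Finset.single_le_sum (f := fun k => |A i k|) (fun k _ => abs_nonneg _)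
            (Finset.mem_erase.mpr ⟨hij, Finset.mem_univ j⟩)
        have h2 := hwdd i
        rw [← h, abs_zero] at h2
        have := abs_nonneg (A i j)
        have : |A i j| = 0 := le_antisymm (h1.trans h2) this
        exact abs_eq_zero.mp this
  refine ⟨hoff, hdpos, hwdd, ?_, ?_⟩
  · by_contra hJ
    rw [Set.not_nonempty_iff_eq_empty] at hJ
    apply hns
    refine det_zero_of_no_walk A hwdd (fun j => (hdpos j).le) hoff ⟨0, hn⟩ ?_ ?_
    · rw [hJ]; exact Set.notMem_empty _
    · rintro ℓ ⟨-, w, -, -, hmem⟩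
      rw [hJ] at hmem
      exact Set.notMem_empty _ hmem
  · intro i hi
    by_contra hno
    push_neg at hno
    exact hns (det_zero_of_no_walk A hwdd (fun j => (hdpos j).le) hoff i hi hno)
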